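/- Let u_p be the positive radial solution of the Henon equation in the unit ball, 0 < α, 1 < p < (N+2+2α)/(N-2), N ≥ 3. Then the linearized problem -Δv = p|x|^α u_p^{p-1} v in B, v = 0 on ∂B has no nontrivial radial solution; i.e., u_p is radially nondegenerate. -/

import Mathlib

open Set Topology Filter

lemma gronwall_zero {h h' : ℝ → ℝ} {a b K : ℝ}
    (hcont : ContinuousOn h (Icc a b))
    (hderiv : ∀ t ∈ Ioc a b, HasDerivAt h (h' t) t)
    (hbound : ∀ t ∈ Ioc a b, |h' t| ≤ K * |h t|)
    (hb : h b = 0) : ∀ t ∈ Icc a b, h t = 0 := by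
  set f : ℝ → ℝ := fun t => h (a + b - t) with hf
  have hmap : ∀ t ∈ Icc a b, a + b - t ∈ Icc a b := by
    intro t ht; constructor <;> [skip; skip] <;> simp at ht ⊢ <;> linarith [ht.1, ht.2]
  have hfc : ContinuousOn f (Icc a b) := by
    apply hcont.comp (by fun_prop) hmap
  have hf' : ∀ t ∈ Ico a b, HasDerivWithinAt f (-(h' (a + b - t))) (Ici t) t := by
    intro t ht
    have hm : a + b - t ∈ Ioc a b := by
      constructor <;> simp at ht ⊢ <;> linarith [ht.1, ht.2]
    have := ((hderiv _ hm).comp t (((hasDerivAt_id t).const_sub (a + b)) :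
      HasDerivAt (fun t => a + b - t) (-1) t))
    have h2 := this.hasDerivWithinAt (s := Ici t)
    simp only [mul_neg, mul_one] at h2
    exact h2
  have key := norm_le_gronwallBound_of_norm_deriv_right_le (f' := fun t => -(h' (a + b - t)))
    (δ := 0) (K := K) (ε := 0) hfc hf' (by simp [hf, hb]) ?_
  · intro t ht
    have h2 : a + b - t ∈ Icc a b := hmap t ht
    have := key (a + b - t) h2
    rw [gronwallBound_ε0_δ0] at this
    simp only [hf] at this
    rw [show a + b - (a + b - t) = t by ring] at this
    have h3 : |h t| ≤ 0 := by simpa [Real.norm_eq_abs] using this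
    have := abs_nonneg (h t)
    have : |h t| = 0 := le_antisymm h3 this
    exact abs_eq_zero.mp this
  · intro t ht
    have hm : a + b - t ∈ Ioc a b := by
      constructor <;> simp at ht ⊢ <;> linarith [ht.1, ht.2]
    have := hbound _ hm
    simp only [Real.norm_eq_abs, abs_neg, hf, add_zero]
    simpa using this

set_option maxHeartbeats 2000000 in
theorem stmt_12 (N : ℕ) (hN : 3 ≤ N) (α p : ℝ) (hα : 0 < α) (hp : 1 < p)
    (hpα : p < ((N : ℝ) + 2 + 2 * α) / ((N : ℝ) - 2))
    (u : ℝ → ℝ) (hu : ContDiff ℝ 2 u)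
    (hODE : ∀ r ∈ Ioo (0:ℝ) 1,
      deriv (fun s => s ^ ((N:ℝ) - 1) * deriv u s) r = -(r ^ ((N:ℝ) - 1 + α) * u r ^ p))
    (hu'0 : deriv u 0 = 0) (hu1 : u 1 = 0)
    (hupos : ∀ r ∈ Ico (0:ℝ) 1, 0 < u r) :
    ∀ v : ℝ → ℝ, ContDiff ℝ 2 v →
      (∀ r ∈ Ioo (0:ℝ) 1,
        deriv (fun s => s ^ ((N:ℝ) - 1) * deriv v s) r
          = -(p * r ^ ((N:ℝ) - 1 + α) * u r ^ (p - 1) * v r)) →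
      deriv v 0 = 0 → v 1 = 0 → ∀ r ∈ Icc (0:ℝ) 1, v r = 0 := by
  intro v hv hODEv hv'0 hv1
  -- basic setup
  have hN3 : (3:ℝ) ≤ (N:ℝ) := by exact_mod_cast hN
  have hN1 : (0:ℝ) < (N:ℝ) - 1 := by linarith
  have hNne : ((N:ℝ) - 1) ≠ 0 := ne_of_gt hN1
  have hp1 : p - 1 ≠ 0 := ne_of_gt (by linarith)
  have hc : ((2 + α) / (p - 1)) * (p - 1) = 2 + α := div_mul_cancel₀ _ hp1
  set c : ℝ := (2 + α) / (p - 1) with hcdef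
  -- regularity
  have hu2 : ContDiff ℝ (1 + 1) u := by norm_num; exact hu
  have hv2 : ContDiff ℝ (1 + 1) v := by norm_num; exact hv
  have hud : Differentiable ℝ u := hu.differentiable (by norm_num)
  have hvd : Differentiable ℝ v := hv.differentiable (by norm_num)
  have hu1' : ContDiff ℝ 1 (deriv u) := (contDiff_succ_iff_deriv.mp hu2).2.2
  have hv1' : ContDiff ℝ 1 (deriv v) := (contDiff_succ_iff_deriv.mp hv2).2.2
  have hu'd : Differentiable ℝ (deriv u) := hu1'.differentiable (by norm_num)
  have hv'd : Differentiable ℝ (deriv v) := hv1'.differentiable (by norm_num)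
  have hu'c : Continuous (deriv u) := hu'd.continuous
  have hv'c : Continuous (deriv v) := hv'd.continuous
  set u2 : ℝ → ℝ := deriv (deriv u) with hu2def
  -- packaged ODE facts
  have Hu : ∀ r ∈ Ioo (0:ℝ) 1, HasDerivAt (fun s => s ^ ((N:ℝ) - 1) * deriv u s)
      (-(r ^ ((N:ℝ) - 1 + α) * u r ^ p)) r := by
    intro r hr
    have hd : HasDerivAt (fun s : ℝ => s ^ ((N:ℝ) - 1) * deriv u s)
        ((((N:ℝ) - 1) * r ^ ((N:ℝ) - 1 - 1)) * deriv u r + r ^ ((N:ℝ) - 1) * u2 r) r :=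
      (Real.hasDerivAt_rpow_const (Or.inl (ne_of_gt hr.1))).mul ((hu'd r).hasDerivAt)
    have := hd.deriv
    rw [hODE r hr] at this
    rw [← this] at hd
    exact hd
  have Hv : ∀ r ∈ Ioo (0:ℝ) 1, HasDerivAt (fun s => s ^ ((N:ℝ) - 1) * deriv v s)
      (-(p * r ^ ((N:ℝ) - 1 + α) * u r ^ (p - 1) * v r)) r := by
    intro r hr
    have hd : HasDerivAt (fun s : ℝ => s ^ ((N:ℝ) - 1) * deriv v s)
        ((((N:ℝ) - 1) * r ^ ((N:ℝ) - 1 - 1)) * deriv v r + r ^ ((N:ℝ) - 1) * deriv (deriv v) r) r :=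
      (Real.hasDerivAt_rpow_const (Or.inl (ne_of_gt hr.1))).mul ((hv'd r).hasDerivAt)
    have := hd.deriv
    rw [hODEv r hr] at this
    rw [← this] at hd
    exact hd
  -- the scaling field Z and its companion Φ
  set Z : ℝ → ℝ := fun r => c * u r + r * deriv u r with hZdef
  set dZ : ℝ → ℝ := fun r => c * deriv u r + (1 * deriv u r + r * u2 r) with hdZdef
  have HZ : ∀ r : ℝ, HasDerivAt Z (dZ r) r := by
    intro r
    exact (((hud r).hasDerivAt.const_mul c)).add ((hasDerivAt_id r).mul ((hu'd r).hasDerivAt))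
  have hZc : Continuous Z := by
    exact (continuous_const.mul hu.continuous).add (continuous_id.mul hu'c)
  set Φ : ℝ → ℝ := fun s => (c + 2 - (N:ℝ)) * (s ^ ((N:ℝ) - 1) * deriv u s)
      - s ^ ((N:ℝ) + α) * u s ^ p with hΦdef
  -- key identity: Φ = r^{N-1} dZ on (0,1)
  have CZ1 : ∀ r ∈ Ioo (0:ℝ) 1, Φ r = r ^ ((N:ℝ) - 1) * dZ r := by
    intro r hr
    have hr0 : (0:ℝ) < r := hr.1
    have hd : HasDerivAt (fun s : ℝ => s ^ ((N:ℝ) - 1) * deriv u s)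
        ((((N:ℝ) - 1) * r ^ ((N:ℝ) - 1 - 1)) * deriv u r + r ^ ((N:ℝ) - 1) * u2 r) r :=
      (Real.hasDerivAt_rpow_const (Or.inl (ne_of_gt hr0))).mul ((hu'd r).hasDerivAt)
    have E := hd.unique (Hu r hr)
    -- rpow relations
    have e1 : r ^ ((N:ℝ) - 1) = r ^ ((N:ℝ) - 1 - 1) * r := by
      rw [← Real.rpow_add_one (ne_of_gt hr0)]; ring_nf
    have e2 : r ^ ((N:ℝ) + α) = r ^ ((N:ℝ) - 1 + α) * r := by
      rw [← Real.rpow_add_one (ne_of_gt hr0)]; ring_nf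
    simp only [hΦdef, hdZdef]
    linear_combination (-r) * E + ((1 - (N:ℝ)) * deriv u r) * e1 + (-(u r ^ p)) * e2
  -- Φ solves the linearized equation along Z
  have CΦ : ∀ r ∈ Ioo (0:ℝ) 1, HasDerivAt Φ
      (-(p * r ^ ((N:ℝ) - 1 + α) * u r ^ (p - 1) * Z r)) r := by
    intro r hr
    have hr0 : (0:ℝ) < r := hr.1
    have hur : 0 < u r := hupos r ⟨le_of_lt hr0, hr.2⟩
    have h1 : HasDerivAt (fun s : ℝ => (c + 2 - (N:ℝ)) * (s ^ ((N:ℝ) - 1) * deriv u s))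
        ((c + 2 - (N:ℝ)) * (-(r ^ ((N:ℝ) - 1 + α) * u r ^ p))) r := (Hu r hr).const_mul _
    have h2 : HasDerivAt (fun s : ℝ => s ^ ((N:ℝ) + α) * u s ^ p)
        ((((N:ℝ) + α) * r ^ ((N:ℝ) + α - 1)) * u r ^ p
          + r ^ ((N:ℝ) + α) * (deriv u r * p * u r ^ (p - 1))) r := by
      exact (Real.hasDerivAt_rpow_const (Or.inl (ne_of_gt hr0))).mul
        (((hud r).hasDerivAt.rpow_const (Or.inl (ne_of_gt hur))))
    have hd := h1.sub h2
    have e2 : r ^ ((N:ℝ) + α) = r ^ ((N:ℝ) - 1 + α) * r := by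
      rw [← Real.rpow_add_one (ne_of_gt hr0)]; ring_nf
    have e3 : r ^ ((N:ℝ) + α - 1) = r ^ ((N:ℝ) - 1 + α) := by ring_nf
    have e4 : u r ^ p = u r ^ (p - 1) * u r := by
      rw [← Real.rpow_add_one (ne_of_gt hur)]; ring_nf
    refine hd.congr_deriv (Eq.symm ?_)
    rw [e2, e3, e4]
    simp only [hZdef]
    linear_combination (-(r ^ ((N:ℝ) - 1 + α) * u r ^ (p - 1) * u r)) * hc
  -- the Wronskian
  set W : ℝ → ℝ := fun r => Z r * (r ^ ((N:ℝ) - 1) * deriv v r) - v r * Φ r with hWdef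
  have HW : ∀ r ∈ Ioo (0:ℝ) 1, HasDerivAt W 0 r := by
    intro r hr
    have hd := ((HZ r).mul (Hv r hr)).sub (((hvd r).hasDerivAt).mul (CΦ r hr))
    refine hd.congr_deriv (Eq.symm ?_)
    rw [CZ1 r hr]
    simp only [hZdef]
    ring
  -- W is constant on (0,1)
  have Wconst : ∀ x ∈ Ioo (0:ℝ) 1, ∀ y ∈ Ioo (0:ℝ) 1, W x = W y := by
    have hWc : ∀ r ∈ Ioo (0:ℝ) 1, ContinuousAt W r := fun r hr => (HW r hr).continuousAt
    have key : ∀ x y : ℝ, x ∈ Ioo (0:ℝ) 1 → y ∈ Ioo (0:ℝ) 1 → x < y → W x = W y := by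
      intro x y hx hy hxy
      have hsub : Icc x y ⊆ Ioo (0:ℝ) 1 :=
        fun z hz => ⟨lt_of_lt_of_le hx.1 hz.1, lt_of_le_of_lt hz.2 hy.2⟩
      obtain ⟨z, hz, hz2⟩ := exists_hasDerivAt_eq_slope W (fun _ => (0:ℝ)) hxy
        (fun z hz => (hWc z (hsub hz)).continuousWithinAt)
        (fun z hz => HW z (hsub ⟨le_of_lt hz.1, le_of_lt hz.2⟩))
      have hne : y - x ≠ 0 := ne_of_gt (by linarith)
      have : W y - W x = 0 := by
        rcases div_eq_zero_iff.mp hz2.symm with h | h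
        · exact h
        · exact absurd h hne
      linarith
    intro x hx y hy
    rcases lt_trichotomy x y with h|h|h
    · exact key x y hx hy h
    · rw [h]
    · exact (key y x hy hx h).symm
  -- W vanishes at 0, hence everywhere
  have hW0 : W 0 = 0 := by
    simp only [hWdef, hΦdef]
    rw [Real.zero_rpow hNne, Real.zero_rpow (show ((N:ℝ) + α) ≠ 0 by positivity)]
    ring
  have hrpc : ContinuousOn (fun s : ℝ => s ^ ((N:ℝ) - 1)) (Icc (0:ℝ) (1/2)) :=
    ContinuousOn.rpow_const continuousOn_id (fun x _ => Or.inr (le_of_lt hN1))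
  have hrpc2 : ContinuousOn (fun s : ℝ => s ^ ((N:ℝ) + α)) (Icc (0:ℝ) (1/2)) :=
    ContinuousOn.rpow_const continuousOn_id (fun x _ => Or.inr (by positivity))
  have hupc : ContinuousOn (fun s : ℝ => u s ^ p) (Icc (0:ℝ) (1/2)) :=
    ContinuousOn.rpow_const hu.continuous.continuousOn (fun x _ => Or.inr (by linarith))
  have hWcont : ContinuousOn W (Icc (0:ℝ) (1/2)) := by
    apply ContinuousOn.sub
    · exact hZc.continuousOn.mul (hrpc.mul hv'c.continuousOn)
    · apply ContinuousOn.mul (hvd.continuous.continuousOn)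
      exact (continuousOn_const.mul (hrpc.mul hu'c.continuousOn)).sub (hrpc2.mul hupc)
  have Wzero : ∀ r ∈ Ioo (0:ℝ) 1, W r = 0 := by
    intro r hr
    have hne : (𝓝[Ioc (0:ℝ) (1/2)] (0:ℝ)).NeBot := by
      apply mem_closure_iff_nhdsWithin_neBot.mp
      rw [closure_Ioc (by norm_num : (0:ℝ) ≠ 1/2)]
      exact ⟨le_rfl, by norm_num⟩
    have h1 : Filter.Tendsto W (𝓝[Ioc (0:ℝ) (1/2)] 0) (𝓝 (W 0)) :=
      (hWcont 0 (by constructor <;> norm_num)).mono Ioc_subset_Icc_self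
    have h2 : Filter.Tendsto W (𝓝[Ioc (0:ℝ) (1/2)] 0) (𝓝 (W r)) := by
      apply Filter.Tendsto.congr' _ tendsto_const_nhds
      filter_upwards [self_mem_nhdsWithin] with x hx
      exact Wconst r hr x ⟨hx.1, lt_of_le_of_lt hx.2 (by norm_num)⟩
    have := tendsto_nhds_unique h2 h1
    rw [hW0] at this
    exact this
  -- u'(1) < 0
  have hu'1 : deriv u 1 < 0 := by
    have hgc : ContinuousOn (fun s : ℝ => s ^ ((N:ℝ) - 1) * deriv u s) (Icc (0:ℝ) 1) :=
      (ContinuousOn.rpow_const continuousOn_id (fun x _ => Or.inr (le_of_lt hN1))).mul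
        hu'c.continuousOn
    have hanti : StrictAntiOn (fun s : ℝ => s ^ ((N:ℝ) - 1) * deriv u s) (Icc (0:ℝ) 1) := by
      apply StrictAntiOn.mono ?_ (le_refl (Icc (0:ℝ) 1))
      apply strictAntiOn_of_deriv_neg (convex_Icc 0 1) hgc
      intro x hx
      rw [interior_Icc] at hx
      rw [hODE x hx]
      have h1 : 0 < x ^ ((N:ℝ) - 1 + α) := Real.rpow_pos_of_pos hx.1 _
      have h2 : 0 < u x ^ p := Real.rpow_pos_of_pos (hupos x ⟨le_of_lt hx.1, hx.2⟩) _
      nlinarith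
    have h3 := hanti (left_mem_Icc.mpr zero_le_one) (right_mem_Icc.mpr zero_le_one) zero_lt_one
    simp only [Real.zero_rpow hNne, Real.one_rpow, zero_mul, one_mul] at h3
    linarith
  have hZ1 : Z 1 < 0 := by
    simp only [hZdef]
    rw [hu1]
    simpa using hu'1
  -- a neighborhood of 1 where Z < 0
  obtain ⟨δ, hδ0, hδ⟩ : ∃ δ > 0, ∀ x : ℝ, |x - 1| < δ → Z x < 0 := by
    have hcZ : ContinuousAt Z 1 := hZc.continuousAt
    rw [Metric.continuousAt_iff] at hcZ
    obtain ⟨δ, hδ0, hδ⟩ := hcZ (-(Z 1)) (by linarith)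
    refine ⟨δ, hδ0, fun x hx => ?_⟩
    have := hδ (by rwa [Real.dist_eq])
    rw [Real.dist_eq] at this
    have := abs_lt.mp this
    linarith [this.1, this.2]
  set a : ℝ := max (1/2) (1 - δ/2) with hadef
  have ha2 : (1/2 : ℝ) ≤ a := le_max_left _ _
  have ha1 : a < 1 := by
    apply max_lt (by norm_num)
    linarith
  have ha0 : (0:ℝ) < a := by linarith
  have hZneg : ∀ x ∈ Ioc a 1, Z x < 0 := by
    intro x hx
    apply hδ
    have h1 : 1 - δ/2 ≤ a := le_max_right _ _
    rw [abs_lt]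
    constructor <;> [linarith [hx.1]; linarith [hx.2]]
  -- the relation Z v' = v Z' on (0,1)
  have rel : ∀ y ∈ Ioo (0:ℝ) 1, Z y * deriv v y = v y * dZ y := by
    intro y hy
    have h1 := Wzero y hy
    simp only [hWdef] at h1
    rw [CZ1 y hy] at h1
    have hY : (0:ℝ) < y ^ ((N:ℝ) - 1) := Real.rpow_pos_of_pos hy.1 _
    have h2 : y ^ ((N:ℝ) - 1) * (Z y * deriv v y - v y * dZ y) = 0 := by linear_combination h1
    have h3 := (mul_eq_zero.mp h2).resolve_left (ne_of_gt hY)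
    linarith
  -- v vanishes on (a, 1]
  have vnear1 : ∀ x ∈ Ioc a 1, v x = 0 := by
    intro x hx
    rcases eq_or_lt_of_le hx.2 with h|h
    · rw [h, hv1]
    · have hsub : Icc x 1 ⊆ Ioc a 1 := fun z hz => ⟨lt_of_lt_of_le hx.1 hz.1, hz.2⟩
      have hqc : ContinuousOn (fun y => v y / Z y) (Icc x 1) :=
        (hvd.continuous.continuousOn).div hZc.continuousOn
          (fun z hz => ne_of_lt (hZneg z (hsub hz)))
      have hq' : ∀ y ∈ Ioo x 1, HasDerivAt (fun y => v y / Z y) ((fun _ => (0:ℝ)) y) y := by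
        intro y hy
        have hay : a < y := lt_trans hx.1 hy.1
        have hyI : y ∈ Ioo (0:ℝ) 1 := ⟨by linarith, hy.2⟩
        have hZy := hZneg y ⟨hay, le_of_lt hy.2⟩
        have hd := ((hvd y).hasDerivAt).div (HZ y) (ne_of_lt hZy)
        have hnum : deriv v y * Z y - v y * dZ y = 0 := by linear_combination rel y hyI
        rw [hnum, zero_div] at hd
        exact hd
      obtain ⟨z, hz, hz2⟩ := exists_hasDerivAt_eq_slope (fun y => v y / Z y)
        (fun _ => (0:ℝ)) h hqc hq'
      have hq1 : v 1 / Z 1 = 0 := by rw [hv1, zero_div]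
      have hdiff : v 1 / Z 1 - v x / Z x = 0 := by
        rcases div_eq_zero_iff.mp hz2.symm with hh | hh
        · exact hh
        · exact absurd hh (ne_of_gt (by linarith))
      have hqx : v x / Z x = 0 := by rw [hq1] at hdiff; linarith
      exact (div_eq_zero_iff.mp hqx).resolve_right (ne_of_lt (hZneg x hx))
  -- midpoint b where v and v' vanish
  set b : ℝ := (a + 1) / 2 with hbdef
  have hab : a < b := by rw [hbdef]; linarith
  have hb1 : b < 1 := by rw [hbdef]; linarith
  have hb0 : (0:ℝ) < b := by linarith
  have hvb : v b = 0 := vnear1 b ⟨hab, le_of_lt hb1⟩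
  have hv'b : deriv v b = 0 := by
    have hev : v =ᶠ[𝓝 b] (fun _ => (0:ℝ)) := by
      filter_upwards [Ioo_mem_nhds hab hb1] with x hx
      exact vnear1 x ⟨hx.1, le_of_lt hx.2⟩
    rw [hev.deriv_eq]
    exact deriv_const _ _
  -- backward uniqueness via Gronwall: v = 0 on (0, b]
  have vsmall : ∀ t ∈ Ioc (0:ℝ) b, v t = 0 := by
    intro t ht
    have htb : t ≤ b := ht.2
    have ht0 : 0 < t := ht.1
    -- the energy function
    set g2 : ℝ → ℝ := fun s => s ^ ((N:ℝ) - 1) * deriv v s with hg2def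
    set h : ℝ → ℝ := fun s => v s ^ 2 + g2 s ^ 2 with hhdef
    set h' : ℝ → ℝ := fun s => 2 * v s * deriv v s
        + 2 * g2 s * (-(p * s ^ ((N:ℝ) - 1 + α) * u s ^ (p - 1) * v s)) with hh'def
    -- bound function
    set Ψ : ℝ → ℝ := fun s => s ^ ((1:ℝ) - (N:ℝ)) + p * s ^ ((N:ℝ) - 1 + α) * u s ^ (p - 1)
      with hΨdef
    have hΨc : ContinuousOn Ψ (Icc t b) := by
      apply ContinuousOn.add
      · exact ContinuousOn.rpow_const continuousOn_id
          (fun x hx => Or.inl (ne_of_gt (lt_of_lt_of_le ht0 hx.1)))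
      · apply ContinuousOn.mul
        · apply ContinuousOn.mul continuousOn_const
          exact ContinuousOn.rpow_const continuousOn_id (fun x hx => Or.inr (by positivity))
        · exact ContinuousOn.rpow_const hu.continuous.continuousOn
            (fun x hx => Or.inr (by linarith))
    obtain ⟨x0, hx0mem, hx0'⟩ := isCompact_Icc.exists_isMaxOn (nonempty_Icc.mpr htb) hΨc
    have hx0 : ∀ s ∈ Icc t b, Ψ s ≤ Ψ x0 := fun s hs => hx0' hs
    set K : ℝ := Ψ x0 with hKdef
    have hIoo : ∀ s ∈ Ioc t b, s ∈ Ioo (0:ℝ) 1 :=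
      fun s hs => ⟨lt_trans ht0 hs.1, lt_of_le_of_lt hs.2 hb1⟩
    have hcont : ContinuousOn h (Icc t b) := by
      apply ContinuousOn.add
      · exact (hvd.continuous.continuousOn).pow 2
      · apply ContinuousOn.pow
        exact (ContinuousOn.rpow_const continuousOn_id
          (fun x _ => Or.inr (le_of_lt hN1))).mul hv'c.continuousOn
    have hderiv : ∀ s ∈ Ioc t b, HasDerivAt h (h' s) s := by
      intro s hs
      have hd := (((hvd s).hasDerivAt).pow 2).add ((Hv s (hIoo s hs)).pow 2)
      refine hd.congr_deriv (Eq.symm ?_)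
      simp only [hh'def, hg2def]
      push_cast
      ring
    have hbound : ∀ s ∈ Ioc t b, |h' s| ≤ K * |h s| := by
      intro s hs
      have hs0 : 0 < s := lt_trans ht0 hs.1
      have hus : 0 < u s := hupos s ⟨le_of_lt hs0, (hIoo s hs).2⟩
      have hsinv : s ^ ((1:ℝ) - (N:ℝ)) * s ^ ((N:ℝ) - 1) = 1 := by
        rw [← Real.rpow_add hs0]
        norm_num
      have edv : deriv v s = s ^ ((1:ℝ) - (N:ℝ)) * (s ^ ((N:ℝ) - 1) * deriv v s) := by
        rw [← mul_assoc, hsinv, one_mul]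
      have e0 : h' s = (2 * (s ^ ((1:ℝ) - (N:ℝ)) - p * s ^ ((N:ℝ) - 1 + α) * u s ^ (p - 1)))
          * (v s * g2 s) := by
        simp only [hh'def, hg2def]
        linear_combination (2 * v s) * edv
      have hr1 : 0 < s ^ ((1:ℝ) - (N:ℝ)) := Real.rpow_pos_of_pos hs0 _
      have hB : 0 < s ^ ((N:ℝ) - 1 + α) := Real.rpow_pos_of_pos hs0 _
      have hQ : 0 < u s ^ (p - 1) := Real.rpow_pos_of_pos hus _
      have hΨpos : 0 < Ψ s := by
        simp only [hΨdef]
        have : 0 < p * s ^ ((N:ℝ) - 1 + α) * u s ^ (p - 1) := by positivity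
        linarith
      have hvg : 2 * |v s * g2 s| ≤ v s ^ 2 + g2 s ^ 2 := by
        rw [abs_mul]
        nlinarith [sq_nonneg (|v s| - |g2 s|), sq_abs (v s), sq_abs (g2 s), abs_nonneg (v s),
          abs_nonneg (g2 s)]
      have habs1 : |2 * (s ^ ((1:ℝ) - (N:ℝ)) - p * s ^ ((N:ℝ) - 1 + α) * u s ^ (p - 1))|
          ≤ 2 * Ψ s := by
        rw [abs_mul]
        simp only [hΨdef]
        rw [abs_of_nonneg (by norm_num : (0:ℝ) ≤ 2)]
        have h1 : 0 < p * s ^ ((N:ℝ) - 1 + α) * u s ^ (p - 1) := by positivity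
        have := abs_sub (s ^ ((1:ℝ) - (N:ℝ))) (p * s ^ ((N:ℝ) - 1 + α) * u s ^ (p - 1))
        rw [abs_of_pos hr1, abs_of_pos h1] at this
        linarith
      have hh_nonneg : 0 ≤ h s := by
        simp only [hhdef]
        positivity
      have hΨK : Ψ s ≤ K := hx0 s ⟨le_of_lt hs.1, hs.2⟩
      calc |h' s| = |2 * (s ^ ((1:ℝ) - (N:ℝ)) - p * s ^ ((N:ℝ) - 1 + α) * u s ^ (p - 1))|
            * |v s * g2 s| := by rw [e0, abs_mul]
        _ ≤ (2 * Ψ s) * |v s * g2 s| := by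
            apply mul_le_mul_of_nonneg_right habs1 (abs_nonneg _)
        _ = Ψ s * (2 * |v s * g2 s|) := by ring
        _ ≤ Ψ s * (v s ^ 2 + g2 s ^ 2) := by
            exact mul_le_mul_of_nonneg_left hvg (le_of_lt hΨpos)
        _ = Ψ s * h s := by simp only [hhdef]
        _ ≤ K * h s := mul_le_mul_of_nonneg_right hΨK hh_nonneg
        _ = K * |h s| := by rw [abs_of_nonneg hh_nonneg]
    have hhb : h b = 0 := by
      simp only [hhdef, hg2def]
      rw [hvb, hv'b]
      ring
    have := gronwall_zero hcont hderiv hbound hhb t (left_mem_Icc.mpr htb)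
    have hv2 : v t ^ 2 = 0 := by
      simp only [hhdef] at this
      nlinarith [sq_nonneg (v t), sq_nonneg (g2 t)]
    exact pow_eq_zero_iff (by norm_num : (2:ℕ) ≠ 0) |>.mp hv2
  -- assemble
  intro r hr
  rcases eq_or_lt_of_le hr.1 with h0|h0
  · -- r = 0 by continuity
    rw [← h0]
    have hne : (𝓝[Ioc (0:ℝ) b] (0:ℝ)).NeBot := by
      apply mem_closure_iff_nhdsWithin_neBot.mp
      rw [closure_Ioc (ne_of_lt hb0)]
      exact ⟨le_rfl, le_of_lt hb0⟩
    have h1 : Filter.Tendsto v (𝓝[Ioc (0:ℝ) b] 0) (𝓝 (v 0)) :=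
      (hvd.continuous.continuousAt).continuousWithinAt
    have h2 : Filter.Tendsto v (𝓝[Ioc (0:ℝ) b] 0) (𝓝 0) := by
      apply Filter.Tendsto.congr' _ tendsto_const_nhds
      filter_upwards [self_mem_nhdsWithin] with x hx
      exact (vsmall x hx).symm
    exact tendsto_nhds_unique h1 h2
  · rcases le_or_gt r b with hb'|hb'
    · exact vsmall r ⟨h0, hb'⟩
    · exact vnear1 r ⟨lt_trans hab hb', hr.2⟩
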